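/- Let σ ∈ (0,1), γ ∈ (0,2), λ > 0, let A : H → Set H and B : H → H be monotone, and let u* ∈ Ω. Suppose w, v ∈ H satisfy w − λB(w) ∈ v + λA(v) and λ‖B(w) − B(v)‖ ≤ σ‖w − v‖, set φ = (w − v) − λ(B(w) − B(v)), assume φ ≠ 0, and let δ = ⟨w − v, φ⟩/‖φ‖² and u⁺ = w − γδφ. Then ‖u⁺ − u*‖² ≤ ‖w − u*‖² − γ(2 − γ)·⟨w − v, φ⟩²/‖φ‖². -/

import Mathlib

open RealInnerProductSpace

/-- One-step contraction inequality:
`‖u⁺ - u*‖² ≤ ‖w - u*‖² - γ(2 - γ)·⟨w - v, φ⟩²/‖φ‖²`. -/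
theorem contraction_step_inequality
    {H : Type*} [NormedAddCommGroup H] [InnerProductSpace ℝ H] [CompleteSpace H]
    (σ γ lam : ℝ) (hσ : σ ∈ Set.Ioo (0 : ℝ) 1) (hγ : γ ∈ Set.Ioo (0 : ℝ) 2) (hlam : 0 < lam)
    (A : H → Set H) (B : H → H)
    (hAmono : ∀ u v : H, ∀ a ∈ A u, ∀ b ∈ A v, 0 ≤ ⟪a - b, u - v⟫)
    (hBmono : ∀ u v : H, 0 ≤ ⟪B u - B v, u - v⟫)
    (ustar : H) (hstar : -B ustar ∈ A ustar)
    (w v : H)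
    (hfb : ∃ a ∈ A v, w - lam • B w = v + lam • a)
    (hls : lam * ‖B w - B v‖ ≤ σ * ‖w - v‖)
    (φ : H) (hφdef : φ = (w - v) - lam • (B w - B v)) (hφ : φ ≠ 0)
    (δ : ℝ) (hδ : δ = ⟪w - v, φ⟫ / ‖φ‖ ^ 2)
    (uplus : H) (huplus : uplus = w - (γ * δ) • φ) :
    ‖uplus - ustar‖ ^ 2 ≤ ‖w - ustar‖ ^ 2 - γ * (2 - γ) * (⟪w - v, φ⟫ ^ 2 / ‖φ‖ ^ 2) := by
  obtain ⟨a, ha, heq⟩ := hfb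
  obtain ⟨hσ0, hσ1⟩ := hσ
  obtain ⟨hγ0, hγ2⟩ := hγ
  have hφ2 : (0:ℝ) < ‖φ‖ ^ 2 := pow_pos (norm_pos_iff.mpr hφ) 2
  set t : ℝ := ⟪w - v, φ⟫ with htdef
  -- t ≥ (1-σ)‖w-v‖² ≥ 0
  have hcs : ⟪w - v, B w - B v⟫ ≤ ‖w - v‖ * ‖B w - B v‖ := real_inner_le_norm _ _
  have ht0 : 0 ≤ t := by
    have h1 : t = ‖w - v‖ ^ 2 - lam * ⟪w - v, B w - B v⟫ := by
      rw [htdef, hφdef, inner_sub_right, real_inner_smul_right, real_inner_self_eq_norm_sq]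
    nlinarith [norm_nonneg (w - v), sq_nonneg (‖w - v‖)]
  -- φ = lam • (a + B v)
  have hφa : φ = lam • (a + B v) := by
    have hlam_a : lam • a = w - v - lam • B w := by
      have h1 : lam • a = w - lam • B w - v := eq_sub_of_add_eq' heq.symm
      rw [h1]; abel
    rw [hφdef, smul_add, hlam_a, smul_sub]; abel
  -- ⟪v - ustar, φ⟫ ≥ 0
  have hvu : 0 ≤ ⟪v - ustar, φ⟫ := by
    have hA := hAmono v ustar a ha (-B ustar) hstar
    have hB := hBmono v ustar
    have : ⟪v - ustar, φ⟫ = lam * (⟪a - -B ustar, v - ustar⟫ + ⟪B v - B ustar, v - ustar⟫) := by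
      rw [hφa, real_inner_smul_right, real_inner_comm]
      rw [show a + B v = (a - -B ustar) + (B v - B ustar) from by abel, inner_add_left]
    nlinarith
  -- ⟪w - ustar, φ⟫ = t + ⟪v - ustar, φ⟫
  have hsplit : ⟪w - ustar, φ⟫ = t + ⟪v - ustar, φ⟫ := by
    rw [htdef, show w - ustar = (w - v) + (v - ustar) from by abel, inner_add_left]
  -- expansion
  have hexp : ‖uplus - ustar‖ ^ 2
      = ‖w - ustar‖ ^ 2 - 2 * (γ * δ) * ⟪w - ustar, φ⟫ + (γ * δ) ^ 2 * ‖φ‖ ^ 2 := by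
    rw [huplus, show w - (γ * δ) • φ - ustar = (w - ustar) - (γ * δ) • φ from by abel]
    rw [norm_sub_sq_real, real_inner_smul_right, norm_smul, mul_pow, Real.norm_eq_abs, sq_abs]
    ring
  have hδ0 : 0 ≤ δ := by rw [hδ]; exact div_nonneg ht0 hφ2.le
  have hδφ : δ * ‖φ‖ ^ 2 = t := by
    rw [hδ]; field_simp
  have key : γ * (2 - γ) * (t ^ 2 / ‖φ‖ ^ 2) = 2 * (γ * δ) * t - (γ * δ) ^ 2 * ‖φ‖ ^ 2 := by
    have : δ = t / ‖φ‖ ^ 2 := hδ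
    rw [this]; field_simp
  rw [hexp, hsplit, key]
  nlinarith [mul_nonneg (mul_nonneg hγ0.le hδ0) hvu]
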